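/- Let F be a field, q ∈ F with q + 1 ≠ 0 and q²(s−1)(t−1) − 1 ≠ 0 in F, and s, t ≥ 1 natural numbers. Then the q-distance matrix D of K_{s,t} satisfies D·L + I = 𝟙·xᵀ, i.e. for all vertices u, v: ∑_{w} D(u,w)·L(w,v) + (1 if u = v else 0) = x(v), where L and x are as defined in the context. -/

import Mathlib

/-- The `q`-distance matrix of the complete bipartite graph `K_{s,t}`,
indexed by `Fin s ⊕ Fin t`: diagonal entries are `0`, entries between the two
parts are `1`, and off-diagonal entries within a part are `q + 1`. -/
def qDistKst (F : Type*) [Field F] (q : F) (s t : ℕ) :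
    Matrix (Fin s ⊕ Fin t) (Fin s ⊕ Fin t) F :=
  Matrix.of fun u v =>
    if u = v then 0 else if u.isLeft = v.isLeft then q + 1 else 1

/-- The special vector `x` of `K_{s,t}`. -/
def xVecKst (F : Type*) [Field F] (q : F) (s t : ℕ) :
    Fin s ⊕ Fin t → F :=
  Sum.elim
    (fun _ => (q * ((t : F) - 1) - 1) /
      ((q + 1) * (q ^ 2 * ((s : F) - 1) * ((t : F) - 1) - 1)))
    (fun _ => (q * ((s : F) - 1) - 1) /
      ((q + 1) * (q ^ 2 * ((s : F) - 1) * ((t : F) - 1) - 1)))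

/-- The matrix `C` in the definition of the Laplacian-like matrix `ℒ` of
`K_{s,t}`. -/
def cMatKst (F : Type*) [Field F] (q : F) (s t : ℕ) :
    Matrix (Fin s ⊕ Fin t) (Fin s ⊕ Fin t) F :=
  Matrix.of fun u v =>
    match u, v with
    | Sum.inl _, Sum.inl _ => -q ^ 2 * ((t : F) - 1)
    | Sum.inr _, Sum.inr _ => -q ^ 2 * ((s : F) - 1)
    | _, _ => q

/-- The Laplacian-like matrix `ℒ` of `K_{s,t}`. -/
def lapKst (F : Type*) [Field F] (q : F) (s t : ℕ) :
    Matrix (Fin s ⊕ Fin t) (Fin s ⊕ Fin t) F :=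
  (1 / ((q + 1) * (q ^ 2 * ((s : F) - 1) * ((t : F) - 1) - 1))) • cMatKst F q s t
    + (1 / (q + 1)) • (1 : Matrix (Fin s ⊕ Fin t) (Fin s ⊕ Fin t) F)

private lemma sum_if_eq_fin {F : Type*} [Field F] {n : ℕ} (i : Fin n) (a b : F) :
    ∑ j : Fin n, (if i = j then a else b) = a + ((n : F) - 1) * b := by
  rw [← Finset.add_sum_erase _ _ (Finset.mem_univ i), if_pos rfl]
  have h1 : ∀ j ∈ Finset.univ.erase i, (if i = j then a else b) = b := by
    intro j hj
    rw [if_neg (Ne.symm (Finset.ne_of_mem_erase hj))]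
  rw [Finset.sum_congr rfl h1, Finset.sum_const, Finset.card_erase_of_mem (Finset.mem_univ i),
    Finset.card_univ, Fintype.card_fin, nsmul_eq_mul, Nat.cast_sub i.pos, Nat.cast_one]

private lemma sum_if_combo {F : Type*} [Field F] {n : ℕ} (i k : Fin n) (c d : F) :
    ∑ x : Fin n, (if i = x then 0 else (c + if x = k then d else 0))
      = ((n : F) - 1) * c + (if i = k then 0 else d) := by
  have h : ∀ x : Fin n, (if i = x then (0:F) else (c + if x = k then d else 0))
      = (if i = x then 0 else c) + (if x = k then (if i = x then 0 else d) else 0) := by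
    intro x; split_ifs <;> simp_all
  simp only [h, Finset.sum_add_distrib, sum_if_eq_fin, Finset.sum_ite_eq',
    Finset.mem_univ, if_true, zero_add]

theorem qDist_mul_lap_add_one (F : Type*) [Field F] (q : F)
    (s t : ℕ) (hs : 1 ≤ s) (ht : 1 ≤ t) (hq : q + 1 ≠ 0)
    (hΔ : q ^ 2 * ((s : F) - 1) * ((t : F) - 1) - 1 ≠ 0) :
    ∀ u v, (∑ w, qDistKst F q s t u w * lapKst F q s t w v)
        + (if u = v then 1 else 0) = xVecKst F q s t v := by
  rintro (i | i) (k | k) <;>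
  · simp only [qDistKst, lapKst, cMatKst, xVecKst, Matrix.add_apply, Matrix.smul_apply,
      Matrix.of_apply, Matrix.one_apply, smul_eq_mul, Fintype.sum_sum_type,
      Sum.elim_inl, Sum.elim_inr, Sum.isLeft_inl, Sum.isLeft_inr, Sum.inl.injEq,
      Sum.inr.injEq, reduceCtorEq, if_true, if_false, mul_ite, ite_mul, mul_zero, zero_mul,
      mul_one, one_mul, add_zero, zero_add, mul_add, sum_if_combo, Finset.sum_add_distrib, Finset.sum_ite_eq,
      Finset.sum_ite_eq', Finset.mem_univ, Finset.sum_const, Finset.card_univ,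
      Fintype.card_fin, nsmul_eq_mul, sum_if_eq_fin]
    first
      | (split_ifs <;> (generalize hD : q ^ 2 * ((s : F) - 1) * ((t : F) - 1) - 1 = D at hΔ ⊢; field_simp; rw [← hD]; ring))
      | (generalize hD : q ^ 2 * ((s : F) - 1) * ((t : F) - 1) - 1 = D at hΔ ⊢; field_simp; rw [← hD]; ring)
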